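/- Let ε > 0, μ > 0, σ > 0 and δ ∈ (0,1) with κ_ε(μ/σ) ≤ δ, where κ_ε(s) = Φ(s/2 − ε/s) − e^ε Φ(−s/2 − ε/s) and Φ is the standard normal CDF. Let m be a positive integer and let η be a random vector in ℝ^m with independent coordinates each distributed as N(0, σ²). Then for every pair θ, θ' ∈ ℝ^m that differ in at most one coordinate and satisfy ‖θ − θ'‖_1 ≤ μ, and for every Borel set S ⊆ ℝ^m, P( θ + η ∈ S ) ≤ e^ε · P( θ' + η ∈ S ) + δ. -/

import Mathlib

open MeasureTheory ProbabilityTheory Finset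

/-- The standard normal cumulative distribution function
`Φ(s) = (1/√(2π)) ∫_{-∞}^s e^{-τ²/2} dτ`. -/
noncomputable def stdNormalCDF (s : ℝ) : ℝ :=
  (Real.sqrt (2 * Real.pi))⁻¹ * ∫ τ in Set.Iic s, Real.exp (-τ ^ 2 / 2)

/-- `κ_ε(s) = Φ(s/2 - ε/s) - e^ε Φ(-s/2 - ε/s)`. -/
noncomputable def kappa (ε s : ℝ) : ℝ :=
  stdNormalCDF (s / 2 - ε / s) - Real.exp ε * stdNormalCDF (-s / 2 - ε / s)

noncomputable def stdPhi (u : ℝ) : ℝ := (Real.sqrt (2 * Real.pi))⁻¹ * Real.exp (-u ^ 2 / 2)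

lemma stdPhi_pos (u : ℝ) : 0 < stdPhi u :=
  mul_pos (inv_pos.2 (Real.sqrt_pos.2 (by positivity))) (Real.exp_pos _)

lemma integrable_gauss_kernel : Integrable (fun τ : ℝ => Real.exp (-τ ^ 2 / 2)) := by
  have h := integrable_exp_neg_mul_sq (b := (1:ℝ)/2) (by norm_num)
  convert h using 2 with τ
  ring_nf

lemma stdNormalCDF_nonneg (s : ℝ) : 0 ≤ stdNormalCDF s := by
  refine mul_nonneg (inv_nonneg.2 (Real.sqrt_nonneg _)) ?_
  exact integral_nonneg fun x => (Real.exp_pos _).le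

lemma hasDerivAt_stdNormalCDF (u : ℝ) : HasDerivAt stdNormalCDF (stdPhi u) u := by
  have hg := integrable_gauss_kernel
  have hcont : Continuous (fun τ : ℝ => Real.exp (-τ ^ 2 / 2)) := by continuity
  have heq : stdNormalCDF = fun s =>
      (Real.sqrt (2 * Real.pi))⁻¹ * ((∫ τ in Set.Iic (0:ℝ), Real.exp (-τ ^ 2 / 2))
        + ∫ τ in (0:ℝ)..s, Real.exp (-τ ^ 2 / 2)) := by
    funext s
    rw [stdNormalCDF, ← intervalIntegral.integral_Iic_sub_Iic hg.integrableOn hg.integrableOn]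
    ring
  rw [heq]
  have h1 : HasDerivAt (fun s => ∫ τ in (0:ℝ)..s, Real.exp (-τ ^ 2 / 2))
      (Real.exp (-u ^ 2 / 2)) u :=
    intervalIntegral.integral_hasDerivAt_right hg.intervalIntegrable
      hcont.aestronglyMeasurable.stronglyMeasurableAtFilter hcont.continuousAt
  simpa [stdPhi, mul_add] using ((h1.const_add (∫ τ in Set.Iic (0:ℝ), Real.exp (-τ ^ 2 / 2))).const_mul (Real.sqrt (2 * Real.pi))⁻¹)

lemma hasDerivAt_kappa (ε : ℝ) {s : ℝ} (hs : s ≠ 0) :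
    HasDerivAt (kappa ε) (stdPhi (s / 2 - ε / s)) s := by
  have hinv : HasDerivAt (fun u : ℝ => ε / u) (-(ε / s ^ 2)) s := by
    have h := (hasDerivAt_inv hs).const_mul ε
    simpa [div_eq_mul_inv, neg_div, mul_comm, mul_assoc, mul_div_assoc] using h
  have ha : HasDerivAt (fun u : ℝ => u / 2 - ε / u) (1 / 2 + ε / s ^ 2) s := by
    have h := ((hasDerivAt_id s).div_const 2).sub hinv
    rw [show (1 / 2 + ε / s ^ 2 : ℝ) = 1 / 2 - -(ε / s ^ 2) by ring]; exact h
  have hb : HasDerivAt (fun u : ℝ => -u / 2 - ε / u) (-(1 / 2) + ε / s ^ 2) s := by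
    have h := (((hasDerivAt_id s).neg).div_const 2).sub hinv
    rw [show (-(1 / 2) + ε / s ^ 2 : ℝ) = -1 / 2 - -(ε / s ^ 2) by ring]; exact h
  have hA := (hasDerivAt_stdNormalCDF (s / 2 - ε / s)).comp s ha
  have hB := ((hasDerivAt_stdNormalCDF (-s / 2 - ε / s)).comp s hb).const_mul (Real.exp ε)
  have h := hA.sub hB
  have hkey : Real.exp ε * stdPhi (-s / 2 - ε / s) = stdPhi (s / 2 - ε / s) := by
    unfold stdPhi
    rw [← mul_assoc, mul_comm (Real.exp ε), mul_assoc, ← Real.exp_add]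
    congr 2
    field_simp
    ring
  have hval : stdPhi (s / 2 - ε / s) * (1 / 2 + ε / s ^ 2) -
      Real.exp ε * (stdPhi (-s / 2 - ε / s) * (-(1 / 2) + ε / s ^ 2))
      = stdPhi (s / 2 - ε / s) := by
    rw [← mul_assoc, hkey]; ring
  rw [hval] at h
  exact h

lemma kappa_mono (ε : ℝ) {s t : ℝ} (hs : 0 < s) (hst : s ≤ t) : kappa ε s ≤ kappa ε t := by
  have hmono : StrictMonoOn (kappa ε) (Set.Ioi 0) := by
    refine strictMonoOn_of_deriv_pos (convex_Ioi 0) ?_ ?_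
    · intro x hx
      exact (hasDerivAt_kappa ε (ne_of_gt (Set.mem_Ioi.1 hx))).continuousAt.continuousWithinAt
    · intro x hx
      rw [interior_Ioi] at hx
      rw [(hasDerivAt_kappa ε (ne_of_gt (Set.mem_Ioi.1 hx))).deriv]
      exact stdPhi_pos _
  exact hmono.monotoneOn hs (lt_of_lt_of_le hs hst) hst

lemma gauss_Iic (s : ℝ) :
    gaussianReal 0 1 (Set.Iic s) = ENNReal.ofReal (stdNormalCDF s) := by
  rw [gaussianReal_apply_eq_integral 0 one_ne_zero]
  congr 1
  rw [stdNormalCDF, ← integral_const_mul]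
  refine setIntegral_congr_fun measurableSet_Iic fun x _ => ?_
  simp [gaussianPDFReal]

lemma gauss_neg_eq : Measure.map (fun x : ℝ => -x) (gaussianReal 0 1) = gaussianReal 0 1 := by
  have h : (fun x : ℝ => -x) = ((-1 : ℝ) * ·) := by funext x; ring
  rw [h, gaussianReal_map_const_mul]
  norm_num

lemma gauss_Ici_std (a : ℝ) :
    gaussianReal 0 1 (Set.Ici a) = ENNReal.ofReal (stdNormalCDF (-a)) := by
  conv_lhs => rw [← gauss_neg_eq]
  rw [Measure.map_apply measurable_neg measurableSet_Ici]
  have h : (fun x : ℝ => -x) ⁻¹' Set.Ici a = Set.Iic (-a) := by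
    ext x; simp [le_neg]
  rw [h, gauss_Iic]

lemma gauss_eq_map {σ : ℝ} (hσ : 0 < σ) (c : ℝ) :
    Measure.map (fun x => σ * x + c) (gaussianReal 0 1)
      = gaussianReal c ⟨σ ^ 2, sq_nonneg σ⟩ := by
  have h1 : (fun x : ℝ => σ * x + c) = (· + c) ∘ (σ * ·) := rfl
  rw [h1, ← Measure.map_map (measurable_add_const c) (measurable_const_mul σ),
    gaussianReal_map_const_mul, gaussianReal_map_add_const]
  norm_num
  rfl

lemma gauss_Ici {σ : ℝ} (hσ : 0 < σ) (c T : ℝ) :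
    gaussianReal c ⟨σ ^ 2, sq_nonneg σ⟩ (Set.Ici T)
      = ENNReal.ofReal (stdNormalCDF ((c - T) / σ)) := by
  rw [← gauss_eq_map hσ c, Measure.map_apply (by fun_prop) measurableSet_Ici]
  have h : (fun x : ℝ => σ * x + c) ⁻¹' Set.Ici T = Set.Ici ((T - c) / σ) := by
    ext x
    simp only [Set.mem_preimage, Set.mem_Ici]
    rw [div_le_iff₀' hσ]  -- (T - c)/σ ≤ x ↔ T - c ≤ σ * x
    constructor <;> intro <;> linarith
  rw [h, gauss_Ici_std, ← neg_div, neg_sub]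

lemma vσ_ne_zero {σ : ℝ} (hσ : 0 < σ) : (⟨σ ^ 2, sq_nonneg σ⟩ : NNReal) ≠ 0 := by
  intro h
  replace h := congrArg Subtype.val h
  simp at h
  exact hσ.ne' h

lemma setIntegral_pdf_Ici {σ : ℝ} (hσ : 0 < σ) (c T : ℝ) :
    ∫ x in Set.Ici T, gaussianPDFReal c ⟨σ ^ 2, sq_nonneg σ⟩ x
      = stdNormalCDF ((c - T) / σ) := by
  have h1 := gauss_Ici hσ c T
  rw [gaussianReal_apply_eq_integral _ (vσ_ne_zero hσ)] at h1
  exact (ENNReal.ofReal_eq_ofReal_iff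
    (integral_nonneg fun x => gaussianPDFReal_nonneg _ _ _) (stdNormalCDF_nonneg _)).1 h1

lemma oneDim_core {ε σ : ℝ} (hε : 0 < ε) (hσ : 0 < σ) {c : ℝ} (hc : 0 < c)
    {A : Set ℝ} (hA : MeasurableSet A) :
    gaussianReal c ⟨σ ^ 2, sq_nonneg σ⟩ A ≤ ENNReal.ofReal (Real.exp ε) *
      gaussianReal 0 ⟨σ ^ 2, sq_nonneg σ⟩ A + ENNReal.ofReal (kappa ε (c / σ)) := by
  set v : NNReal := ⟨σ ^ 2, sq_nonneg σ⟩ with hv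
  set T : ℝ := ε * σ ^ 2 / c + c / 2 with hT
  set f : ℝ → ℝ := fun x => gaussianPDFReal c v x - Real.exp ε * gaussianPDFReal 0 v x with hf
  have hcoe : (v : ℝ) = σ ^ 2 := rfl
  have hexp : ∀ x : ℝ, (-(x - c) ^ 2 / (2 * σ ^ 2)) - (ε + (-(x - 0) ^ 2 / (2 * σ ^ 2)))
      = c * (x - T) / σ ^ 2 := by
    intro x
    rw [hT]
    field_simp
    ring
  have hC : 0 < (Real.sqrt (2 * Real.pi * v))⁻¹ := by
    rw [hcoe]
    positivity
  have h_sign : ∀ x : ℝ, (T ≤ x → 0 ≤ f x) ∧ (x ≤ T → f x ≤ 0) := by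
    intro x
    have hpdf : ∀ m : ℝ, gaussianPDFReal m v x
        = (Real.sqrt (2 * Real.pi * v))⁻¹ * Real.exp (-(x - m) ^ 2 / (2 * σ ^ 2)) := by
      intro m
      rw [gaussianPDFReal, hcoe]
    have hkey : f x = (Real.sqrt (2 * Real.pi * v))⁻¹ *
        (Real.exp (-(x - c) ^ 2 / (2 * σ ^ 2)) - Real.exp (ε + -(x - 0) ^ 2 / (2 * σ ^ 2))) := by
      rw [hf]
      simp only [hpdf, Real.exp_add]
      ring
    constructor
    · intro hx
      rw [hkey]
      refine mul_nonneg hC.le (sub_nonneg.2 (Real.exp_le_exp.2 ?_))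
      have h1 := hexp x
      have h2 : 0 ≤ c * (x - T) / σ ^ 2 :=
        div_nonneg (mul_nonneg hc.le (sub_nonneg.2 hx)) (sq_nonneg σ)
      linarith
    · intro hx
      rw [hkey]
      refine mul_nonpos_of_nonneg_of_nonpos hC.le (sub_nonpos.2 (Real.exp_le_exp.2 ?_))
      have h1 := hexp x
      have h2 : c * (x - T) / σ ^ 2 ≤ 0 :=
        div_nonpos_of_nonpos_of_nonneg
          (mul_nonpos_of_nonneg_of_nonpos hc.le (sub_nonpos.2 hx)) (sq_nonneg σ)
      linarith
  have hint_c : Integrable (gaussianPDFReal c v) := integrable_gaussianPDFReal c v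
  have hint_0 : Integrable (fun x => Real.exp ε * gaussianPDFReal 0 v x) :=
    (integrable_gaussianPDFReal 0 v).const_mul _
  have hint_f : Integrable f := hint_c.sub hint_0
  -- ∫_A f ≤ ∫_{Ici T} f
  have hstep1 : ∫ x in A, f x ≤ ∫ x in Set.Ici T, f x := by
    have hsplit : (∫ x in A ∩ Set.Ici T, f x) + ∫ x in A \ Set.Ici T, f x = ∫ x in A, f x :=
      integral_inter_add_diff measurableSet_Ici hint_f.integrableOn
    have h2 : ∫ x in A \ Set.Ici T, f x ≤ 0 := by
      refine setIntegral_nonpos (hA.diff measurableSet_Ici) fun x hx => ?_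
      exact (h_sign x).2 (le_of_not_ge fun h => hx.2 h)
    have h3 : ∫ x in A ∩ Set.Ici T, f x ≤ ∫ x in Set.Ici T, f x := by
      refine setIntegral_mono_set hint_f.integrableOn ?_ ?_
      · exact (ae_restrict_iff' measurableSet_Ici).2 (ae_of_all _ fun x hx => (h_sign x).1 hx)
      · exact HasSubset.Subset.eventuallyLE Set.inter_subset_right
    linarith
  -- ∫_{Ici T} f = kappa ε (c/σ)
  have hstep2 : ∫ x in Set.Ici T, f x = kappa ε (c / σ) := by
    rw [hf]
    rw [integral_sub hint_c.integrableOn hint_0.integrableOn, integral_const_mul,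
      setIntegral_pdf_Ici hσ, setIntegral_pdf_Ici hσ, kappa]
    have e1 : (c - T) / σ = (c / σ) / 2 - ε / (c / σ) := by
      rw [hT]; field_simp; ring
    have e2 : (0 - T) / σ = -(c / σ) / 2 - ε / (c / σ) := by
      rw [hT]; field_simp; ring
    rw [e1, e2]
  -- real inequality
  have hreal : ∫ x in A, gaussianPDFReal c v x
      ≤ Real.exp ε * (∫ x in A, gaussianPDFReal 0 v x) + kappa ε (c / σ) := by
    have h := hstep1.trans_eq hstep2
    rw [hf] at h
    rw [integral_sub hint_c.integrableOn hint_0.integrableOn, integral_const_mul] at h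
    linarith
  rw [gaussianReal_apply_eq_integral _ (vσ_ne_zero hσ), gaussianReal_apply_eq_integral _ (vσ_ne_zero hσ)]
  rw [show (⟨σ ^ 2, sq_nonneg σ⟩ : NNReal) = v from rfl]
  calc ENNReal.ofReal (∫ x in A, gaussianPDFReal c v x)
      ≤ ENNReal.ofReal (Real.exp ε * (∫ x in A, gaussianPDFReal 0 v x) + kappa ε (c / σ)) :=
        ENNReal.ofReal_le_ofReal hreal
    _ ≤ ENNReal.ofReal (Real.exp ε * (∫ x in A, gaussianPDFReal 0 v x))
        + ENNReal.ofReal (kappa ε (c / σ)) := ENNReal.ofReal_add_le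
    _ = ENNReal.ofReal (Real.exp ε) * ENNReal.ofReal (∫ x in A, gaussianPDFReal 0 v x)
        + ENNReal.ofReal (kappa ε (c / σ)) := by
        rw [ENNReal.ofReal_mul (Real.exp_pos _).le]

lemma gauss_map_neg (c : ℝ) (v : NNReal) :
    Measure.map (fun x : ℝ => -x) (gaussianReal c v) = gaussianReal (-c) v := by
  have h : (fun x : ℝ => -x) = ((-1 : ℝ) * ·) := by funext x; ring
  rw [h, gaussianReal_map_const_mul]
  norm_num

lemma oneDim {ε μ σ δ : ℝ} (hε : 0 < ε) (hμ : 0 < μ) (hσ : 0 < σ) (hδ0 : 0 ≤ δ)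
    (hκ : kappa ε (μ / σ) ≤ δ) {c : ℝ} (hc : |c| ≤ μ)
    {A : Set ℝ} (hA : MeasurableSet A) :
    gaussianReal c ⟨σ ^ 2, sq_nonneg σ⟩ A ≤ ENNReal.ofReal (Real.exp ε) *
      gaussianReal 0 ⟨σ ^ 2, sq_nonneg σ⟩ A + ENNReal.ofReal δ := by
  have hone : (1 : ENNReal) ≤ ENNReal.ofReal (Real.exp ε) := by
    rw [← ENNReal.ofReal_one]
    exact ENNReal.ofReal_le_ofReal (Real.one_le_exp hε.le)
  have hcore : ∀ c' : ℝ, 0 < c' → c' ≤ μ → ∀ A' : Set ℝ, MeasurableSet A' →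
      gaussianReal c' ⟨σ ^ 2, sq_nonneg σ⟩ A' ≤ ENNReal.ofReal (Real.exp ε) *
        gaussianReal 0 ⟨σ ^ 2, sq_nonneg σ⟩ A' + ENNReal.ofReal δ := by
    intro c' hc' hc'μ A' hA'
    refine (oneDim_core hε hσ hc' hA').trans ?_
    gcongr
    refine (kappa_mono ε (div_pos hc' hσ) ?_).trans hκ
    gcongr
  rcases lt_trichotomy c 0 with hneg | hzero | hpos
  · have h1 := gauss_map_neg (-c) ⟨σ ^ 2, sq_nonneg σ⟩
    rw [neg_neg] at h1
    have h0 := gauss_map_neg 0 ⟨σ ^ 2, sq_nonneg σ⟩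
    rw [neg_zero] at h0
    have e1 : gaussianReal c ⟨σ ^ 2, sq_nonneg σ⟩ A
        = gaussianReal (-c) ⟨σ ^ 2, sq_nonneg σ⟩ ((fun x : ℝ => -x) ⁻¹' A) := by
      rw [← h1, Measure.map_apply measurable_neg hA]
    have e0 : gaussianReal 0 ⟨σ ^ 2, sq_nonneg σ⟩ A
        = gaussianReal 0 ⟨σ ^ 2, sq_nonneg σ⟩ ((fun x : ℝ => -x) ⁻¹' A) := by
      conv_lhs => rw [← h0]
      rw [Measure.map_apply measurable_neg hA]
    rw [e1, e0]
    refine hcore (-c) (by linarith) ?_ _ (hA.preimage measurable_neg)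
    calc -c ≤ |c| := neg_le_abs c
    _ ≤ μ := hc
  · subst hzero
    calc gaussianReal 0 ⟨σ ^ 2, sq_nonneg σ⟩ A
        = 1 * gaussianReal 0 ⟨σ ^ 2, sq_nonneg σ⟩ A := (one_mul _).symm
    _ ≤ ENNReal.ofReal (Real.exp ε) * gaussianReal 0 ⟨σ ^ 2, sq_nonneg σ⟩ A :=
        mul_le_mul_left hone _
    _ ≤ _ := le_self_add
  · exact hcore c hpos ((le_abs_self c).trans hc) A hA

lemma pi_comp {n : ℕ} (j0 : Fin (n + 1)) (μs νs : Fin (n + 1) → Measure ℝ)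
    [∀ i, IsProbabilityMeasure (μs i)] [∀ i, IsProbabilityMeasure (νs i)]
    (heq : ∀ i, i ≠ j0 → μs i = νs i) {K δ' : ENNReal} (hK : K ≠ ⊤)
    (hj : ∀ A : Set ℝ, MeasurableSet A → μs j0 A ≤ K * νs j0 A + δ')
    {s : Set (Fin (n + 1) → ℝ)} (hs : MeasurableSet s) :
    Measure.pi μs s ≤ K * Measure.pi νs s + δ' := by
  classical
  set e := MeasurableEquiv.piFinSuccAbove (fun _ : Fin (n + 1) => ℝ) j0 with he
  have hμ := measurePreserving_piFinSuccAbove μs j0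
  have hν := measurePreserving_piFinSuccAbove νs j0
  set t : Set (ℝ × (Fin n → ℝ)) := e.symm ⁻¹' s with htdef
  have ht : MeasurableSet t := hs.preimage e.symm.measurable
  have hpre : e ⁻¹' t = s := by
    rw [htdef, ← Set.preimage_comp]
    simp
  have hμs : Measure.pi μs s
      = ((μs j0).prod (Measure.pi fun j => μs (j0.succAbove j))) t := by
    rw [← hμ.map_eq, Measure.map_apply e.measurable ht, hpre]
  have hνs : Measure.pi νs s
      = ((νs j0).prod (Measure.pi fun j => νs (j0.succAbove j))) t := by
    rw [← hν.map_eq, Measure.map_apply e.measurable ht, hpre]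
  have hrest : (fun j => μs (j0.succAbove j)) = fun j => νs (j0.succAbove j) :=
    funext fun j => heq _ (Fin.succAbove_ne j0 j)
  haveI : ∀ j : Fin n, IsProbabilityMeasure (μs (j0.succAbove j)) := fun j => inferInstance
  rw [hμs, hνs, Measure.prod_apply_symm ht, Measure.prod_apply_symm ht, ← hrest]
  calc ∫⁻ y, μs j0 ((fun x => (x, y)) ⁻¹' t) ∂(Measure.pi fun j => μs (j0.succAbove j))
      ≤ ∫⁻ y, (K * νs j0 ((fun x => (x, y)) ⁻¹' t) + δ')
          ∂(Measure.pi fun j => μs (j0.succAbove j)) := by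
        refine lintegral_mono fun y => hj _ ?_
        exact ht.preimage (measurable_prodMk_right)
    _ = (∫⁻ y, K * νs j0 ((fun x => (x, y)) ⁻¹' t)
          ∂(Measure.pi fun j => μs (j0.succAbove j))) + δ' := by
        rw [lintegral_add_right _ measurable_const, lintegral_const, measure_univ, mul_one]
    _ = K * (∫⁻ y, νs j0 ((fun x => (x, y)) ⁻¹' t)
          ∂(Measure.pi fun j => μs (j0.succAbove j))) + δ' := by
        rw [lintegral_const_mul' _ _ hK]

lemma map_eq_pi {m : ℕ} {Ω : Type*} [MeasurableSpace Ω] (P : Measure Ω)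
    [IsProbabilityMeasure P] (η : Ω → Fin m → ℝ) (ν : Fin m → Measure ℝ)
    [∀ i, IsProbabilityMeasure (ν i)]
    (hindep : iIndepFun (fun j ω => η ω j) P)
    (hlaw : ∀ j, Measure.map (fun ω => η ω j) P = ν j) (hη : AEMeasurable η P) :
    Measure.map η P = Measure.pi ν := by
  refine (Measure.pi_eq fun s hs => ?_).symm
  rw [Measure.map_apply_of_aemeasurable hη (MeasurableSet.univ_pi hs)]
  have hpre : η ⁻¹' Set.pi Set.univ s = ⋂ i ∈ Finset.univ, (fun ω => η ω i) ⁻¹' s i := by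
    ext ω
    simp [Set.mem_univ_pi]
  rw [hpre, hindep.measure_inter_preimage_eq_mul Finset.univ (fun i _ => hs i)]
  refine Finset.prod_congr rfl fun i _ => ?_
  rw [← hlaw i]
  exact (Measure.map_apply_of_aemeasurable
    ((measurable_pi_apply i).comp_aemeasurable hη) (hs i)).symm


/-- Gaussian mechanism. Let `ε, μ, σ > 0` and `δ ∈ (0,1)` with
`κ_ε(μ/σ) ≤ δ`. Let `η` be a random vector in `ℝ^m` with independent coordinates, each
distributed as `N(0, σ²)`. Then for every pair `θ, θ'` that differ in at most one
coordinate and satisfy `‖θ - θ'‖₁ ≤ μ`, and every Borel set `S ⊆ ℝ^m`,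
`P(θ + η ∈ S) ≤ e^ε P(θ' + η ∈ S) + δ`. -/
theorem stmt13 (ε μ σ δ : ℝ) (hε : 0 < ε) (hμ : 0 < μ) (hσ : 0 < σ)
    (hδ : δ ∈ Set.Ioo (0 : ℝ) 1) (hκ : kappa ε (μ / σ) ≤ δ)
    (m : ℕ) (hm : 0 < m)
    {Ω : Type*} [MeasurableSpace Ω] (P : Measure Ω) [IsProbabilityMeasure P]
    (η : Ω → Fin m → ℝ)
    (hindep : iIndepFun (fun j ω => η ω j) P)
    (hlaw : ∀ j, Measure.map (fun ω => η ω j) P = gaussianReal 0 ⟨σ ^ 2, sq_nonneg σ⟩)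
    (θ θ' : Fin m → ℝ)
    (hadj0 : {j | θ j ≠ θ' j}.Subsingleton)
    (hadj1 : ∑ j, |θ j - θ' j| ≤ μ)
    (S : Set (Fin m → ℝ)) (hS : MeasurableSet S) :
    P {ω | θ + η ω ∈ S} ≤
      ENNReal.ofReal (Real.exp ε) * P {ω | θ' + η ω ∈ S} + ENNReal.ofReal δ := by
  obtain ⟨n, rfl⟩ : ∃ n, m = n + 1 := ⟨m - 1, (Nat.succ_pred_eq_of_pos hm).symm⟩
  set v : NNReal := ⟨σ ^ 2, sq_nonneg σ⟩ with hv
  set d : Fin (n + 1) → ℝ := fun i => θ i - θ' i with hd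
  obtain ⟨j0, hj0⟩ : ∃ j0 : Fin (n + 1), ∀ i, i ≠ j0 → θ i = θ' i := by
    by_cases h : ∃ i, θ i ≠ θ' i
    · obtain ⟨i0, hi0⟩ := h
      refine ⟨i0, fun i hi => by_contra fun hne => hi (hadj0 hne hi0)⟩
    · push_neg at h
      exact ⟨0, fun i _ => h i⟩
  have hdj0 : |d j0| ≤ μ := by
    refine le_trans ?_ hadj1
    exact Finset.single_le_sum (f := fun i => |θ i - θ' i|)
      (fun i _ => abs_nonneg _) (Finset.mem_univ j0)
  have hdi : ∀ i, i ≠ j0 → d i = 0 := fun i hi => by rw [hd]; simp [hj0 i hi]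
  -- measurability of η
  have hja : ∀ j, AEMeasurable (fun ω => η ω j) P := fun j =>
    aemeasurable_of_map_neZero (by rw [hlaw j]; infer_instance)
  have hη : AEMeasurable η P := by
    refine ⟨fun ω i => (hja i).mk _ ω, measurable_pi_lambda _ fun i => (hja i).measurable_mk, ?_⟩
    filter_upwards [ae_all_iff.2 fun i => (hja i).ae_eq_mk] with ω hω
    funext i
    exact hω i
  have hmapν : Measure.map η P = Measure.pi (fun _ : Fin (n + 1) => gaussianReal 0 v) :=
    map_eq_pi P η _ hindep hlaw hη
  -- the sets
  have hmeas_add : ∀ c : Fin (n + 1) → ℝ, Measurable (fun x : Fin (n + 1) → ℝ => c + x) := by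
    intro c
    exact measurable_pi_lambda _ fun i => show Measurable fun x : Fin (n + 1) → ℝ => c i + x i from (measurable_const_add (c i)).comp (measurable_pi_apply i)
  have hAθ : MeasurableSet {x : Fin (n + 1) → ℝ | θ + x ∈ S} := (hmeas_add θ) hS
  have hAθ' : MeasurableSet {x : Fin (n + 1) → ℝ | θ' + x ∈ S} := (hmeas_add θ') hS
  have hPθ : P {ω | θ + η ω ∈ S}
      = Measure.pi (fun _ : Fin (n + 1) => gaussianReal 0 v) {x | θ + x ∈ S} := by
    rw [← hmapν, Measure.map_apply_of_aemeasurable hη hAθ]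
    rfl
  have hPθ' : P {ω | θ' + η ω ∈ S}
      = Measure.pi (fun _ : Fin (n + 1) => gaussianReal 0 v) {x | θ' + x ∈ S} := by
    rw [← hmapν, Measure.map_apply_of_aemeasurable hη hAθ']
    rfl
  rw [hPθ, hPθ']
  -- shift
  have hshift : {x : Fin (n + 1) → ℝ | θ + x ∈ S}
      = (fun x => d + x) ⁻¹' {x : Fin (n + 1) → ℝ | θ' + x ∈ S} := by
    ext x
    have hx : θ' + (d + x) = θ + x := by
      funext i
      simp only [Pi.add_apply, hd]
      ring
    simp only [Set.mem_preimage, Set.mem_setOf_eq, hx]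
  have hmap2 : Measure.map (fun x => d + x) (Measure.pi (fun _ : Fin (n + 1) => gaussianReal 0 v))
      = Measure.pi (fun i => gaussianReal (d i) v) := by
    have hmp : ∀ i : Fin (n + 1),
        MeasurePreserving (fun x => d i + x) (gaussianReal 0 v) (gaussianReal (d i) v) :=
      fun i => ⟨measurable_const_add _, by rw [gaussianReal_map_const_add, zero_add]⟩
    have h := (measurePreserving_pi _ _ hmp).map_eq
    rw [← h]
    rfl
  rw [hshift, ← Measure.map_apply (hmeas_add d) hAθ', hmap2]
  exact pi_comp j0 (fun i => gaussianReal (d i) v) (fun _ => gaussianReal 0 v)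
    (fun i hi => by simp only [hdi i hi]) ENNReal.ofReal_ne_top
    (fun A hA => oneDim hε hμ hσ hδ.1.le hκ (hdj0) hA) hAθ'
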